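/- arXiv:2408.08034 — 2 statements merged into one kernel-verified Lean document; each statement's English description precedes it below -/
import Mathlib

section
/- Fix d : ℕ, real numbers α ≥ 0, ξ > 0, μ > 0, a finite index set E, vectors a_e ∈ EuclideanSpace ℝ (Fin d) and reals c_e for e ∈ E. Define the map G : EuclideanSpace ℝ (Fin d) → EuclideanSpace ℝ (Fin d) by G(x) = −((x_i + ξ)^(−α))_i + μ Σ_{e ∈ E} (1/(1 + exp(−⟪a_e, x⟫ + c_e))) • a_e (the gradient of the smoothly penalized NUM objective V_S(x) = −Σ_i (x_i + ξ)^(1−α)/(1−α) + μ Σ_e ln(1 + exp(⟪a_e, x⟫ − c_e))). Then for all x, y in the nonnegative orthant, ‖G(x) − G(y)‖ ≤ β_V · ‖x − y‖, where β_V = α/ξ^(α+1) + (μ/4) Σ_{e ∈ E} ‖a_e‖²; that is, V_S is β_V-smooth on the nonnegative orthant. -/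
lemma rpow_lip_aux {α ξ : ℝ} (hα : 0 ≤ α) (hξ : 0 < ξ) {p q : ℝ} (hp : ξ ≤ p) (hq : ξ ≤ q) :
    |p ^ (-α) - q ^ (-α)| ≤ α / ξ ^ (α + 1) * |p - q| := by
  have hC : α / ξ ^ (α + 1) = α * ξ ^ (-(α + 1)) := by
    rw [Real.rpow_neg hξ.le, div_eq_mul_inv]
  have key := Convex.norm_image_sub_le_of_norm_hasDerivWithin_le
    (f := fun t : ℝ => t ^ (-α)) (f' := fun t : ℝ => (-α) * t ^ (-α - 1))
    (C := α / ξ ^ (α + 1)) (s := Set.Ici ξ)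
    (fun t ht => ((Real.hasDerivAt_rpow_const (p := -α)
      (Or.inl (by have : (0:ℝ) < t := lt_of_lt_of_le hξ ht; linarith))).hasDerivWithinAt))
    (fun t ht => by
      have ht' : (0:ℝ) < t := lt_of_lt_of_le hξ ht
      have h1 : t ^ (-α - 1) ≤ ξ ^ (-α - 1) :=
        Real.rpow_le_rpow_of_nonpos hξ ht (by linarith)
      have h2 : 0 ≤ t ^ (-α - 1) := (Real.rpow_pos_of_pos ht' _).le
      rw [Real.norm_eq_abs, abs_mul, abs_neg, abs_of_nonneg hα, abs_of_nonneg h2, hC]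
      have : (-(α + 1)) = -α - 1 := by ring
      rw [this]
      exact mul_le_mul_of_nonneg_left h1 hα)
    (convex_Ici ξ) hq hp
  simpa [Real.norm_eq_abs] using key

lemma logistic_lip_aux (u v : ℝ) :
    |(1 + Real.exp (-u))⁻¹ - (1 + Real.exp (-v))⁻¹| ≤ (1/4) * |u - v| := by
  have key := Convex.norm_image_sub_le_of_norm_hasDerivWithin_le
    (f := fun t : ℝ => (1 + Real.exp (-t))⁻¹)
    (f' := fun t : ℝ => Real.exp (-t) / (1 + Real.exp (-t)) ^ 2)
    (C := 1/4) (s := Set.univ)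
    (fun t _ => by
      have h1 : HasDerivAt (fun t : ℝ => 1 + Real.exp (-t)) (-Real.exp (-t)) t := by
        have := (Real.hasDerivAt_exp (-t)).comp t (hasDerivAt_neg t)
        simpa using this.const_add 1
      have hne : (1 + Real.exp (-t)) ≠ 0 := by positivity
      have := h1.inv hne
      have heq : -(-Real.exp (-t)) / (1 + Real.exp (-t)) ^ 2
          = Real.exp (-t) / (1 + Real.exp (-t)) ^ 2 := by ring
      rw [heq] at this
      exact this.hasDerivWithinAt)
    (fun t _ => by
      have he : 0 < Real.exp (-t) := Real.exp_pos _
      rw [Real.norm_eq_abs, abs_of_nonneg (by positivity)]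
      rw [div_le_iff₀ (by positivity)]
      nlinarith [sq_nonneg (1 - Real.exp (-t))])
    convex_univ (Set.mem_univ v) (Set.mem_univ u)
  simpa [Real.norm_eq_abs] using key

open Real RealInnerProductSpace

open Real RealInnerProductSpace

/-- The gradient `G` of the smoothly penalized NUM objective
`V_S(x) = −Σ_i (x_i + ξ)^(1−α)/(1−α) + μ Σ_e ln(1 + exp(⟪a_e, x⟫ − c_e))`
is `β_V`-Lipschitz on the nonnegative orthant, where
`β_V = α/ξ^(α+1) + (μ/4) Σ_e ‖a_e‖²`; i.e. `V_S` is `β_V`-smooth there. -/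
theorem stmt_6 (d : ℕ) (α ξ μ : ℝ) (hα : 0 ≤ α) (hξ : 0 < ξ) (hμ : 0 < μ)
    (E : Type*) [Fintype E]
    (a : E → EuclideanSpace ℝ (Fin d)) (c : E → ℝ)
    (G : EuclideanSpace ℝ (Fin d) → EuclideanSpace ℝ (Fin d))
    (hG : ∀ x : EuclideanSpace ℝ (Fin d),
      G x = -(show EuclideanSpace ℝ (Fin d) from WithLp.toLp 2 (fun i : Fin d => (x i + ξ) ^ (-α)))
        + μ • ∑ e, (1 / (1 + Real.exp (-⟪a e, x⟫ + c e))) • a e) :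
    ∀ x y : EuclideanSpace ℝ (Fin d), (∀ i, 0 ≤ x i) → (∀ i, 0 ≤ y i) →
      ‖G x - G y‖ ≤ (α / ξ ^ (α + 1) + (μ / 4) * ∑ e, ‖a e‖ ^ 2) * ‖x - y‖ := by
  intro x y hx hy
  set C := α / ξ ^ (α + 1) with hCdef
  have hC0 : 0 ≤ C := by
    have := Real.rpow_pos_of_pos hξ (α + 1)
    positivity
  set F : EuclideanSpace ℝ (Fin d) → EuclideanSpace ℝ (Fin d) :=
    fun z => WithLp.toLp 2 (fun i : Fin d => (z i + ξ) ^ (-α)) with hF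
  set s : E → EuclideanSpace ℝ (Fin d) → ℝ :=
    fun e z => 1 / (1 + Real.exp (-⟪a e, z⟫ + c e)) with hs
  have hsplit : G x - G y = (F y - F x) + μ • ∑ e, (s e x - s e y) • a e := by
    rw [hG x, hG y]
    simp only [sub_smul, Finset.sum_sub_distrib, smul_sub]
    abel
  have h1 : ‖F y - F x‖ ≤ C * ‖x - y‖ := by
    have hcoord : ∀ i, |(F y - F x) i| ≤ C * |(x - y) i| := by
      intro i
      have key := rpow_lip_aux hα hξ (p := y i + ξ) (q := x i + ξ)
        (by linarith [hy i]) (by linarith [hx i])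
      have e1 : (F y - F x) i = (y i + ξ) ^ (-α) - (x i + ξ) ^ (-α) := by
        simp [hF]
      have e2 : (x - y) i = x i - y i := by simp
      rw [e1, e2]
      calc |(y i + ξ) ^ (-α) - (x i + ξ) ^ (-α)|
          ≤ C * |y i + ξ - (x i + ξ)| := key
        _ = C * |x i - y i| := by rw [show y i + ξ - (x i + ξ) = -(x i - y i) by ring, abs_neg]
    rw [EuclideanSpace.norm_eq, EuclideanSpace.norm_eq,
      ← Real.sqrt_sq hC0, ← Real.sqrt_mul (sq_nonneg C)]
    refine Real.sqrt_le_sqrt ?_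
    rw [Finset.mul_sum]
    refine Finset.sum_le_sum fun i _ => ?_
    rw [Real.norm_eq_abs, Real.norm_eq_abs]
    calc |(F y - F x) i| ^ 2 ≤ (C * |(x - y) i|) ^ 2 := by
          have := hcoord i
          nlinarith [abs_nonneg ((F y - F x) i)]
      _ = C ^ 2 * |(x - y) i| ^ 2 := by ring
  have h2 : ‖∑ e, (s e x - s e y) • a e‖ ≤ (1/4 * ∑ e, ‖a e‖ ^ 2) * ‖x - y‖ := by
    calc ‖∑ e, (s e x - s e y) • a e‖ ≤ ∑ e, ‖(s e x - s e y) • a e‖ := norm_sum_le _ _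
      _ ≤ ∑ e, (1/4 * ‖a e‖ ^ 2) * ‖x - y‖ := by
          refine Finset.sum_le_sum fun e _ => ?_
          rw [norm_smul, Real.norm_eq_abs]
          have hlog : |s e x - s e y| ≤ (1/4) * |⟪a e, x - y⟫| := by
            have key := logistic_lip_aux (⟪a e, x⟫ - c e) (⟪a e, y⟫ - c e)
            have e1 : s e x = (1 + Real.exp (-(⟪a e, x⟫ - c e)))⁻¹ := by
              simp [hs, one_div]; ring_nf
            have e2 : s e y = (1 + Real.exp (-(⟪a e, y⟫ - c e)))⁻¹ := by
              simp [hs, one_div]; ring_nf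
            have e3 : ⟪a e, x⟫ - c e - (⟪a e, y⟫ - c e) = ⟪a e, x - y⟫ := by
              rw [inner_sub_right]; ring
            rw [e1, e2]
            rw [e3] at key
            exact key
          have hinner : |⟪a e, x - y⟫| ≤ ‖a e‖ * ‖x - y‖ := abs_real_inner_le_norm _ _
          calc |s e x - s e y| * ‖a e‖ ≤ ((1/4) * (‖a e‖ * ‖x - y‖)) * ‖a e‖ := by
                refine mul_le_mul_of_nonneg_right (hlog.trans ?_) (norm_nonneg _)
                exact mul_le_mul_of_nonneg_left hinner (by norm_num)
            _ = (1/4 * ‖a e‖ ^ 2) * ‖x - y‖ := by ring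
      _ = (1/4 * ∑ e, ‖a e‖ ^ 2) * ‖x - y‖ := by
          rw [← Finset.sum_mul, Finset.mul_sum]
  calc ‖G x - G y‖ ≤ ‖F y - F x‖ + μ * ‖∑ e, (s e x - s e y) • a e‖ := by
        rw [hsplit]
        refine (norm_add_le _ _).trans ?_
        rw [norm_smul, Real.norm_eq_abs, abs_of_pos hμ]
    _ ≤ C * ‖x - y‖ + μ * ((1/4 * ∑ e, ‖a e‖ ^ 2) * ‖x - y‖) := by
        refine add_le_add h1 (mul_le_mul_of_nonneg_left h2 hμ.le)
    _ = (C + (μ / 4) * ∑ e, ‖a e‖ ^ 2) * ‖x - y‖ := by ring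
end

section
/- Fix d : ℕ and β > 0. Let f : EuclideanSpace ℝ (Fin d) → ℝ be convex and differentiable with gradient ∇f that is β-Lipschitz on all of EuclideanSpace ℝ (Fin d). Let K be the nonnegative orthant, let x* ∈ K satisfy f(x*) ≤ f(z) for all z ∈ K, and let x⁰ ∈ K. Define sequences by y⁰ = x⁰, a₀ = 1, and for t ≥ 0: x^{t+1} = [y^t − (1/β)∇f(y^t)]₊ (coordinatewise positive part), a_{t+1} = (1 + √(4a_t² + 1))/2, y^{t+1} = x^{t+1} + ((a_t − 1)/a_{t+1})·(x^{t+1} − x^t). Then for every T ≥ 1, f(x^T) − f(x*) ≤ 2β‖x* − x⁰‖²/(T + 1)². -/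
open Real
open scoped RealInnerProductSpace

variable {E : Type*} [NormedAddCommGroup E] [InnerProductSpace ℝ E] [CompleteSpace E]

lemma line_deriv {f : E → ℝ} {f' : E → E}
    (hdiff : ∀ x, HasGradientAt f (f' x) x) (p v : E) (t : ℝ) :
    HasDerivAt (fun s : ℝ => f (p + s • v)) (⟪f' (p + t • v), v⟫) t := by
  have hline : HasDerivAt (fun s : ℝ => p + s • v) v t := by
    simpa using ((hasDerivAt_id t).smul_const v).const_add p
  have h := (hdiff (p + t • v)).hasFDerivAt.comp_hasDerivAt t hline
  simp [InnerProductSpace.toDual_apply_apply] at h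
  exact h

lemma descent_lemma {f : E → ℝ} {f' : E → E} {β : ℝ}
    (hdiff : ∀ x, HasGradientAt f (f' x) x)
    (hlip : ∀ x y : E, ‖f' x - f' y‖ ≤ β * ‖x - y‖) (p q : E) :
    f q ≤ f p + ⟪f' p, q - p⟫ + β / 2 * ‖q - p‖ ^ 2 := by
  set v := q - p with hv
  set ψ : ℝ → ℝ := fun t => f (p + t • v) - t * ⟪f' p, v⟫ - β / 2 * t ^ 2 * ‖v‖ ^ 2 with hψ
  have hd : ∀ t : ℝ, HasDerivAt ψ (⟪f' (p + t • v), v⟫ - ⟪f' p, v⟫ - β * t * ‖v‖ ^ 2) t := by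
    intro t
    have h1 := line_deriv hdiff p v t
    have h2 : HasDerivAt (fun t : ℝ => t * ⟪f' p, v⟫) ⟪f' p, v⟫ t := by
      simpa using (hasDerivAt_id t).mul_const (⟪f' p, v⟫)
    have h3 : HasDerivAt (fun t : ℝ => β / 2 * t ^ 2 * ‖v‖ ^ 2)
        (β * t * ‖v‖ ^ 2) t := by
      have := ((hasDerivAt_pow 2 t).const_mul (β / 2)).mul_const (‖v‖ ^ 2)
      refine this.congr_deriv ?_
      ring
    exact (h1.sub h2).sub h3
  have hanti : AntitoneOn ψ (Set.Icc (0 : ℝ) 1) := by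
    apply antitoneOn_of_deriv_nonpos (convex_Icc 0 1)
    · exact fun t _ => (hd t).continuousAt.continuousWithinAt
    · exact fun t _ => ((hd t).differentiableAt).differentiableWithinAt
    · intro t ht
      rw [interior_Icc] at ht
      rw [(hd t).deriv]
      have hb : ⟪f' (p + t • v) - f' p, v⟫ ≤ β * t * ‖v‖ ^ 2 := by
        calc ⟪f' (p + t • v) - f' p, v⟫ ≤ ‖f' (p + t • v) - f' p‖ * ‖v‖ :=
              real_inner_le_norm _ _
          _ ≤ β * ‖(p + t • v) - p‖ * ‖v‖ := by
              gcongr; exact hlip _ _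
          _ = β * (|t| * ‖v‖) * ‖v‖ := by
              rw [add_sub_cancel_left, norm_smul, Real.norm_eq_abs]
          _ = β * t * ‖v‖ ^ 2 := by
              rw [abs_of_pos ht.1]; ring
      rw [inner_sub_left] at hb
      linarith
  have := hanti (Set.left_mem_Icc.2 zero_le_one) (Set.right_mem_Icc.2 zero_le_one) zero_le_one
  simp only [hψ, one_smul, zero_smul, add_zero, one_pow, zero_pow, mul_zero, zero_mul,
    mul_one, one_mul, sub_zero] at this
  have hq : p + v = q := by rw [hv]; abel
  rw [hq] at this
  linarith

lemma convex_grad_ineq {f : E → ℝ} {f' : E → E}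
    (hconv : ConvexOn ℝ Set.univ f)
    (hdiff : ∀ x, HasGradientAt f (f' x) x) (p z : E) :
    f p + ⟪f' p, z - p⟫ ≤ f z := by
  set v := z - p with hv
  have hder : HasDerivAt (fun s : ℝ => f (p + s • v)) (⟪f' p, v⟫) 0 := by
    simpa using line_deriv hdiff p v 0
  rw [hasDerivAt_iff_tendsto_slope] at hder
  have hder' : Filter.Tendsto (slope (fun s : ℝ => f (p + s • v)) 0)
      (nhdsWithin 0 (Set.Ioi 0)) (nhds (⟪f' p, v⟫)) :=
    hder.mono_left (nhdsWithin_mono 0 fun t ht => ne_of_gt ht)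
  have hle : ∀ᶠ t in nhdsWithin (0:ℝ) (Set.Ioi 0),
      slope (fun s : ℝ => f (p + s • v)) 0 t ≤ f z - f p := by
    filter_upwards [Ioc_mem_nhdsGT_of_mem (Set.left_mem_Ico.2 zero_lt_one)] with t ht
    have hcomb : f (p + t • v) ≤ (1 - t) * f p + t * f z := by
      have := hconv.2 (Set.mem_univ p) (Set.mem_univ z)
        (by linarith [ht.2] : (0:ℝ) ≤ 1 - t) (le_of_lt ht.1) (by ring)
      have heq : (1 - t) • p + t • z = p + t • v := by
        rw [hv]; module
      rw [heq] at this
      simpa using this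
    rw [slope_def_field]
    simp only [zero_smul, add_zero, sub_zero]
    rw [div_le_iff₀ ht.1]
    nlinarith [ht.1]
  have := le_of_tendsto hder' hle
  linarith

lemma combo_identity (aa : ℝ) (w xx xs : E) :
    ‖(aa - 1) • (w - xx) + (w - xs)‖ ^ 2
      = aa * (aa - 1) * ‖w - xx‖ ^ 2 + aa * ‖w - xs‖ ^ 2 - (aa - 1) * ‖xx - xs‖ ^ 2 := by
  have h : ‖xx - xs‖ ^ 2 = ‖w - xx‖ ^ 2 - 2 * ⟪w - xx, w - xs⟫ + ‖w - xs‖ ^ 2 := by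
    have he : xx - xs = (w - xs) - (w - xx) := by abel
    rw [he, norm_sub_sq_real, real_inner_comm]; ring
  rw [norm_add_sq_real, norm_smul, real_inner_smul_left, h, Real.norm_eq_abs, mul_pow, sq_abs]
  ring

set_option maxHeartbeats 2000000 in
/-- Convergence of Nesterov's accelerated gradient method with step size `1/β`
for a convex, `β`-smooth objective minimized over the nonnegative orthant:
`f(x^T) − f(x*) ≤ 2β‖x* − x⁰‖²/(T+1)²` for every `T ≥ 1`. -/
theorem stmt_11 (d : ℕ) (β : ℝ) (hβ : 0 < β)
    (f : EuclideanSpace ℝ (Fin d) → ℝ)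
    (f' : EuclideanSpace ℝ (Fin d) → EuclideanSpace ℝ (Fin d))
    (hconv : ConvexOn ℝ Set.univ f)
    (hdiff : ∀ x : EuclideanSpace ℝ (Fin d), HasGradientAt f (f' x) x)
    (hlip : ∀ x y : EuclideanSpace ℝ (Fin d), ‖f' x - f' y‖ ≤ β * ‖x - y‖)
    (xstar : EuclideanSpace ℝ (Fin d)) (hxstarK : ∀ i, 0 ≤ xstar i)
    (hmin : ∀ z : EuclideanSpace ℝ (Fin d), (∀ i, 0 ≤ z i) → f xstar ≤ f z)
    (x y : ℕ → EuclideanSpace ℝ (Fin d)) (a : ℕ → ℝ)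
    (hx0K : ∀ i, 0 ≤ x 0 i)
    (hy0 : y 0 = x 0) (ha0 : a 0 = 1)
    (hxrec : ∀ t : ℕ, ∀ i : Fin d,
      x (t + 1) i = max ((y t - (1 / β) • f' (y t)) i) 0)
    (harec : ∀ t : ℕ, a (t + 1) = (1 + Real.sqrt (4 * (a t) ^ 2 + 1)) / 2)
    (hyrec : ∀ t : ℕ,
      y (t + 1) = x (t + 1) + ((a t - 1) / a (t + 1)) • (x (t + 1) - x t)) :
    ∀ T : ℕ, 1 ≤ T →
      f (x T) - f xstar ≤ 2 * β * ‖xstar - x 0‖ ^ 2 / ((T : ℝ) + 1) ^ 2 := by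
  -- basic facts about a
  have hsq : ∀ t, Real.sqrt (4 * (a t) ^ 2 + 1) ^ 2 = 4 * (a t) ^ 2 + 1 := fun t =>
    Real.sq_sqrt (by positivity)
  have haone : ∀ t, 1 ≤ a t := by
    intro t
    cases t with
    | zero => rw [ha0]
    | succ t =>
      rw [harec t]
      have h1 : (1 : ℝ) ≤ Real.sqrt (4 * (a t) ^ 2 + 1) := by
        nlinarith [hsq t, Real.sqrt_nonneg (4 * (a t) ^ 2 + 1), sq_nonneg (a t)]
      linarith
  have hgrow : ∀ t : ℕ, ((t : ℝ) + 2) / 2 ≤ a t := by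
    intro t
    induction t with
    | zero => simp [ha0]
    | succ t ih =>
      rw [harec t]
      have h0 : 0 ≤ a t := by linarith [haone t]
      have h1 : 2 * a t ≤ Real.sqrt (4 * (a t) ^ 2 + 1) := by
        nlinarith [hsq t, Real.sqrt_nonneg (4 * (a t) ^ 2 + 1)]
      push_cast
      linarith
  have harel : ∀ t, (a (t + 1)) ^ 2 - a (t + 1) = (a t) ^ 2 := by
    intro t
    rw [harec t]
    have := hsq t
    nlinarith [this]
  -- membership in K
  have hK : ∀ t, ∀ i, 0 ≤ x t i := by
    intro t
    cases t with
    | zero => exact hx0K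
    | succ t => intro i; rw [hxrec t i]; exact le_max_right _ _
  -- key inequality
  have key : ∀ (t : ℕ) (z : EuclideanSpace ℝ (Fin d)), (∀ i, 0 ≤ z i) →
      f (x (t + 1)) - f z ≤ β / 2 * (‖y t - z‖ ^ 2 - ‖x (t + 1) - z‖ ^ 2) := by
    intro t z hz
    set g := f' (y t) with hg
    have hproj : ⟪(y t - (1 / β) • g) - x (t + 1), z - x (t + 1)⟫ ≤ 0 := by
      rw [PiLp.inner_apply]
      apply Finset.sum_nonpos
      intro i _
      simp only [PiLp.sub_apply, RCLike.inner_apply, conj_trivial]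
      rw [hxrec t i]
      rcases le_or_gt 0 ((y t - (1 / β) • g) i) with hc | hc
      · rw [max_eq_left hc]; simp
      · rw [max_eq_right hc.le]
        simp only [sub_zero]
        exact mul_nonpos_iff.2 (Or.inl ⟨by simpa using hz i, hc.le⟩)
    have hproj2 : β * ⟪y t - x (t + 1), z - x (t + 1)⟫ ≤ ⟪g, z - x (t + 1)⟫ := by
      have hre : (y t - (1 / β) • g) - x (t + 1) = (y t - x (t + 1)) - (1 / β) • g := by
        module
      rw [hre, inner_sub_left, real_inner_smul_left] at hproj
      have h2 := mul_le_mul_of_nonneg_left (by linarith :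
        ⟪y t - x (t + 1), z - x (t + 1)⟫ ≤ 1 / β * ⟪g, z - x (t + 1)⟫) hβ.le
      calc β * ⟪y t - x (t + 1), z - x (t + 1)⟫
          ≤ β * (1 / β * ⟪g, z - x (t + 1)⟫) := h2
        _ = ⟪g, z - x (t + 1)⟫ := by field_simp
    have hdes := descent_lemma hdiff hlip (y t) (x (t + 1))
    have hcvx := convex_grad_ineq hconv hdiff (y t) z
    have hia : ⟪g, x (t + 1) - y t⟫ - ⟪g, z - y t⟫ = -⟪g, z - x (t + 1)⟫ := by
      rw [← inner_sub_right, ← inner_neg_right]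
      congr 1
      abel
    have hexpβ : β / 2 * ‖y t - z‖ ^ 2
        = β / 2 * ‖y t - x (t + 1)‖ ^ 2 + β * ⟪y t - x (t + 1), x (t + 1) - z⟫
          + β / 2 * ‖x (t + 1) - z‖ ^ 2 := by
      rw [show y t - z = (y t - x (t + 1)) + (x (t + 1) - z) by abel, norm_add_sq_real]
      ring
    have hneg : ⟪y t - x (t + 1), z - x (t + 1)⟫ = -⟪y t - x (t + 1), x (t + 1) - z⟫ := by
      rw [← inner_neg_right]
      congr 1
      abel
    rw [hneg] at hproj2
    have hnr : ‖x (t + 1) - y t‖ = ‖y t - x (t + 1)‖ := norm_sub_rev _ _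
    rw [hnr] at hdes
    linarith
  -- the Lyapunov sequence
  set S : ℕ → EuclideanSpace ℝ (Fin d) :=
    fun t => (a t - 1) • (y t - x t) + (y t - xstar) with hSdef
  have hS0 : ‖S 0‖ ^ 2 = ‖xstar - x 0‖ ^ 2 := by
    have : S 0 = x 0 - xstar := by rw [hSdef]; simp [ha0, hy0]
    rw [this, ← norm_neg]
    congr 2
    abel
  have hSsucc : ∀ t, S (t + 1) = (a t - 1) • (x (t + 1) - x t) + (x (t + 1) - xstar) := by
    intro t
    have hne : a (t + 1) ≠ 0 := by linarith [haone (t + 1)]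
    have hmul : a (t + 1) - 1 + 1 = a (t + 1) := by ring
    rw [hSdef]
    simp only [hyrec t]
    have hc : (a (t + 1) - 1) * ((a t - 1) / a (t + 1)) + ((a t - 1) / a (t + 1))
        = a t - 1 := by field_simp; ring
    match_scalars <;> field_simp <;> ring
  have step : ∀ t, (a t) ^ 2 * (f (x (t + 1)) - f xstar) + β / 2 * ‖S (t + 1)‖ ^ 2 ≤
      ((a t) ^ 2 - a t) * (f (x t) - f xstar) + β / 2 * ‖S t‖ ^ 2 := by
    intro t
    have I1 := key t (x t) (hK t)
    have I2 := key t xstar hxstarK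
    have ht1 := haone t
    have hw1 : 0 ≤ a t * (a t - 1) := by nlinarith
    have m1 := mul_le_mul_of_nonneg_left I1 hw1
    have m2 := mul_le_mul_of_nonneg_left I2 (by linarith : (0:ℝ) ≤ a t)
    rw [hSsucc t]
    rw [show S t = (a t - 1) • (y t - x t) + (y t - xstar) from rfl]
    rw [combo_identity, combo_identity]
    nlinarith [m1, m2]
  have tel : ∀ t, (a t) ^ 2 * (f (x (t + 1)) - f xstar) + β / 2 * ‖S (t + 1)‖ ^ 2
      ≤ β / 2 * ‖S 0‖ ^ 2 := by
    intro t
    induction t with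
    | zero =>
      have h := step 0
      rw [ha0] at h ⊢
      norm_num at h ⊢
      linarith
    | succ t ih =>
      have h := step (t + 1)
      rw [show ((a (t+1))^2 - a (t+1)) = (a t)^2 from harel t] at h
      linarith
  intro T hT
  obtain ⟨t, rfl⟩ : ∃ t, T = t + 1 := ⟨T - 1, (Nat.succ_pred_eq_of_pos hT).symm⟩
  have h := tel t
  rw [hS0] at h
  have hnn : (0:ℝ) ≤ β / 2 * ‖S (t + 1)‖ ^ 2 := by positivity
  have hδ : 0 ≤ f (x (t + 1)) - f xstar := by linarith [hmin (x (t + 1)) (hK (t + 1))]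
  have hub : (a t) ^ 2 * (f (x (t + 1)) - f xstar) ≤ β / 2 * ‖xstar - x 0‖ ^ 2 := by
    linarith
  have hat := hgrow t
  have hat0 : (0:ℝ) < a t := by linarith [haone t]
  have h2 : ((t : ℝ) + 2) ^ 2 / 4 ≤ (a t) ^ 2 := by
    have hh := mul_le_mul hat hat (by positivity) hat0.le
    nlinarith [hh]
  have hpos : (0:ℝ) < (((t + 1 : ℕ) : ℝ) + 1) ^ 2 := by positivity
  rw [le_div_iff₀ hpos]
  push_cast
  nlinarith [mul_le_mul_of_nonneg_left h2 hδ, hub]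
end
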